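/- Exponential mechanism privacy: given a utility function q : D × R → ℝ over a finite range R with sensitivity Δq = max_{r} max_{neighboring D₁,D₂} |q(D₁,r) − q(D₂,r)|, the mechanism that outputs r with probability proportional to exp(ε·q(D,r)/(2Δq)) satisfies ε-DP. -/

import Mathlib

theorem exponential_mechanism_dp {Db R : Type*} [Fintype R] [Nonempty R]
    (Neighbor : Db → Db → Prop)
    (hsymm : ∀ D D', Neighbor D D' → Neighbor D' D)
    (q : Db → R → ℝ) (Δq ε : ℝ) (hΔq : 0 < Δq) (hε : 0 < ε)
    (hsens : ∀ r : R, ∀ D₁ D₂, Neighbor D₁ D₂ → |q D₁ r - q D₂ r| ≤ Δq)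
    (p : Db → R → ℝ)
    (hp : ∀ D r, p D r =
      Real.exp (ε * q D r / (2 * Δq)) / ∑ r' : R, Real.exp (ε * q D r' / (2 * Δq))) :
    ∀ D D', Neighbor D D' → ∀ S : Finset R,
      ∑ r ∈ S, p D r ≤ Real.exp ε * ∑ r ∈ S, p D' r := by
  intro D D' hN S
  set a : R → ℝ := fun r => Real.exp (ε * q D r / (2 * Δq)) with ha
  set b : R → ℝ := fun r => Real.exp (ε * q D' r / (2 * Δq)) with hb
  have hpos : ∀ r, 0 < a r := fun r => Real.exp_pos _
  have hposb : ∀ r, 0 < b r := fun r => Real.exp_pos _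
  have hSa : 0 < ∑ r' : R, a r' := Finset.sum_pos (fun r _ => hpos r) Finset.univ_nonempty
  have hSb : 0 < ∑ r' : R, b r' := Finset.sum_pos (fun r _ => hposb r) Finset.univ_nonempty
  -- key exponent bound
  have key : ∀ (D₁ D₂ : Db), Neighbor D₁ D₂ → ∀ r,
      Real.exp (ε * q D₁ r / (2 * Δq)) ≤ Real.exp (ε/2) * Real.exp (ε * q D₂ r / (2 * Δq)) := by
    intro D₁ D₂ h r
    rw [← Real.exp_add]
    apply Real.exp_le_exp.mpr
    have h1 : q D₁ r - q D₂ r ≤ Δq := (abs_le.mp (hsens r D₁ D₂ h)).2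
    have h2 : ε * q D₁ r / (2*Δq) - ε * q D₂ r / (2*Δq) = ε * (q D₁ r - q D₂ r) / (2*Δq) := by
      ring
    have h3 : ε * (q D₁ r - q D₂ r) / (2*Δq) ≤ ε * Δq / (2*Δq) := by
      gcongr
    have h4 : ε * Δq / (2*Δq) = ε/2 := by field_simp
    linarith
  have hab : ∀ r, a r ≤ Real.exp (ε/2) * b r := key D D' hN
  have hba : ∀ r, b r ≤ Real.exp (ε/2) * a r := key D' D (hsymm _ _ hN)
  have hsum : (∑ r' : R, b r') ≤ Real.exp (ε/2) * ∑ r' : R, a r' := by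
    rw [Finset.mul_sum]; exact Finset.sum_le_sum fun r _ => hba r
  have hpoint : ∀ r, p D r ≤ Real.exp ε * p D' r := by
    intro r
    rw [hp, hp, ← mul_div_assoc, div_le_div_iff₀ hSa hSb]
    calc a r * ∑ r' : R, b r' ≤ (Real.exp (ε/2) * b r) * (Real.exp (ε/2) * ∑ r' : R, a r') :=
          mul_le_mul (hab r) hsum hSb.le (by positivity)
      _ = (Real.exp (ε/2) * Real.exp (ε/2)) * (b r * ∑ r' : R, a r') := by ring
      _ = Real.exp ε * b r * ∑ r' : R, a r' := by
          rw [← Real.exp_add, add_halves]; ring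
  calc ∑ r ∈ S, p D r ≤ ∑ r ∈ S, Real.exp ε * p D' r :=
        Finset.sum_le_sum fun r _ => hpoint r
    _ = Real.exp ε * ∑ r ∈ S, p D' r := (Finset.mul_sum _ _ _).symm
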